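/- Let μ = (δ_{v₁} + δ_{v₂})/2 with v₁ = diag(i, −i) and v₂ = [[0, i],[i, 0]] in SU(2). Then the smallest closed subgroup of SU(2) containing {v₁, v₂} is the 8-element group G = {±Id, ±v₁, ±v₂, ±v₁v₂}, and for every z ∈ ℂ ∪ {∞}, the orbit of the projective point ê_z (the class of (1,z), with ê_∞ the class of (0,1)) under G is {ê_z, ê_{z⁻¹}, ê_{−z}, ê_{−z⁻¹}} (conventions 0⁻¹ = ∞, ∞⁻¹ = 0, −∞ = ∞); moreover the uniform measure (1/4)(δ_{ê_z} + δ_{ê_{−z}} + δ_{ê_{z⁻¹}} + δ_{ê_{−z⁻¹}}) is invariant for the kernel Π(x̂,S) = ∫ 1_S(v·x̂)‖vx‖² dμ(v). -/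

import Mathlib

open MeasureTheory Filter Topology OnePoint
open scoped ComplexOrder Matrix InnerProductSpace ENNReal
noncomputable section
attribute [local instance] Classical.propDecidable

abbrev Mat2 := Matrix (Fin 2) (Fin 2) ℂ
abbrev Evec2 := EuclideanSpace ℂ (Fin 2)

instance : MeasurableSpace Mat2 :=
  inferInstanceAs (MeasurableSpace (Fin 2 → Fin 2 → ℂ))
instance : MeasurableSpace Evec2 := borel _
instance : BorelSpace Evec2 := ⟨rfl⟩
instance : MeasurableSpace (Projectivization ℂ Evec2) :=
  inferInstanceAs (MeasurableSpace (Quotient (projectivizationSetoid ℂ Evec2)))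

def unitRep (x : Projectivization ℂ Evec2) : Evec2 := (‖x.rep‖⁻¹ : ℂ) • x.rep

def matVec (v : Mat2) (x : Evec2) : Evec2 := Matrix.toEuclideanLin v x

def kerInt (v : Mat2) (x : Projectivization ℂ Evec2) (S : Set (Projectivization ℂ Evec2)) : ℝ :=
  if h : matVec v (unitRep x) = 0 then 0
  else S.indicator (fun _ => ‖matVec v (unitRep x)‖ ^ 2) (Projectivization.mk ℂ _ h)

/-- The transition kernel `Π(x̂, S) = ∫ 1_S(v·x̂) ‖v x‖² dμ(v)`. -/
def PiKer (μ : Measure Mat2) (x : Projectivization ℂ Evec2)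
    (S : Set (Projectivization ℂ Evec2)) : ℝ :=
  ∫ v, kerInt v x S ∂μ

def v1 : Mat2 := !![Complex.I, 0; 0, -Complex.I]
def v2 : Mat2 := !![0, Complex.I; Complex.I, 0]

/-- The 8-element group `G = {±Id, ±v₁, ±v₂, ±v₁v₂}`. -/
def G : Set Mat2 := {1, -1, v1, -v1, v2, -v2, v1 * v2, -(v1 * v2)}

/-- Homogeneous representative of `ê_z`, `z ∈ ℂ ∪ {∞}`: `e_z = (1, z)`, `e_∞ = (0, 1)`. -/
def eP (z : OnePoint ℂ) : Evec2 :=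
  z.elim ((WithLp.equiv 2 (Fin 2 → ℂ)).symm ![0, 1])
    (fun w => (WithLp.equiv 2 (Fin 2 → ℂ)).symm ![1, w])

lemma eP_ne (z : OnePoint ℂ) : eP z ≠ 0 := by
  induction z using OnePoint.rec with
  | infty =>
    intro h
    have := congrFun (congrArg (WithLp.equiv 2 (Fin 2 → ℂ)) h) 1
    simp [eP] at this
  | coe w =>
    intro h
    have := congrFun (congrArg (WithLp.equiv 2 (Fin 2 → ℂ)) h) 0
    simp [eP] at this

/-- The projective point `ê_z`. -/
def pz (z : OnePoint ℂ) : Projectivization ℂ Evec2 := Projectivization.mk ℂ (eP z) (eP_ne z)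

/-- Inversion `z ↦ z⁻¹` on `ℂ ∪ {∞}`, with `0⁻¹ = ∞` and `∞⁻¹ = 0`. -/
def pinv (z : OnePoint ℂ) : OnePoint ℂ :=
  z.elim ((0 : ℂ) : OnePoint ℂ) (fun w => if w = 0 then ∞ else ((w⁻¹ : ℂ) : OnePoint ℂ))

/-- Negation `z ↦ -z` on `ℂ ∪ {∞}`, with `-∞ = ∞`. -/
def pneg (z : OnePoint ℂ) : OnePoint ℂ := z.elim ∞ (fun w => ((-w : ℂ) : OnePoint ℂ))

/-- The measure `μ = (δ_{v₁} + δ_{v₂})/2`. -/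
def muEx : Measure Mat2 := (2 : ℝ≥0∞)⁻¹ • (Measure.dirac v1 + Measure.dirac v2)

/-- The uniform measure on the orbit of `ê_z`. -/
def nuEx (z : OnePoint ℂ) : Measure (Projectivization ℂ Evec2) :=
  (4 : ℝ≥0∞)⁻¹ • (Measure.dirac (pz z) + Measure.dirac (pz (pneg z))
    + Measure.dirac (pz (pinv z)) + Measure.dirac (pz (pneg (pinv z))))

lemma v1_mul_v1 : v1 * v1 = -1 := by
  ext i j; fin_cases i <;> fin_cases j <;>
    simp [v1, Matrix.mul_apply, Fin.sum_univ_two, Complex.I_mul_I]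

lemma hGsu : ∀ g ∈ G, gᴴ * g = 1 ∧ g.det = 1 := by
  intro g hg
  rcases hg with h|h|h|h|h|h|h|h <;> subst h <;> constructor <;>
    first
    | (ext i j; fin_cases i <;> fin_cases j <;>
        simp [v1, v2, Matrix.mul_apply, Fin.sum_univ_two, Matrix.conjTranspose_apply,
          Complex.ext_iff] <;> norm_num)
    | (simp [v1, v2, Matrix.det_fin_two, Matrix.mul_fin_two, Complex.ext_iff] <;> norm_num)

lemma v2_mul_v2 : v2 * v2 = -1 := by
  ext i j; fin_cases i <;> fin_cases j <;>
    simp [v2, Matrix.mul_apply, Fin.sum_univ_two, Complex.I_mul_I]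

lemma v2_mul_v1 : v2 * v1 = -(v1 * v2) := by
  ext i j; fin_cases i <;> fin_cases j <;>
    simp [v1, v2, Matrix.mul_apply, Fin.sum_univ_two]

lemma A1' (x : Mat2) : v1 * (v1 * x) = -x := by rw [← mul_assoc, v1_mul_v1, neg_one_mul]
lemma A2' (x : Mat2) : v2 * (v2 * x) = -x := by rw [← mul_assoc, v2_mul_v2, neg_one_mul]
lemma B' (x : Mat2) : v2 * (v1 * x) = -(v1 * (v2 * x)) := by
  rw [← mul_assoc, v2_mul_v1, ← mul_assoc, neg_mul]

lemma hG1 : (1 : Mat2) ∈ G := Or.inl rfl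

lemma hGmul : ∀ a ∈ G, ∀ b ∈ G, a * b ∈ G := by
  intro a ha b hb
  rcases ha with h|h|h|h|h|h|h|h <;> subst h <;>
  rcases hb with h|h|h|h|h|h|h|h <;> subst h <;>
  simp only [G, Set.mem_insert_iff, Set.mem_singleton_iff, one_mul, mul_one, mul_assoc,
    v1_mul_v1, v2_mul_v2, v2_mul_v1, A1', A2', B', neg_mul, mul_neg, neg_neg, neg_one_mul,
    mul_neg_one] <;> tauto

lemma v1_star : v1ᴴ = -v1 := by
  ext i j; fin_cases i <;> fin_cases j <;> simp [v1, Matrix.conjTranspose_apply]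

lemma v2_star : v2ᴴ = -v2 := by
  ext i j; fin_cases i <;> fin_cases j <;> simp [v2, Matrix.conjTranspose_apply]

lemma v12_star : (v1 * v2)ᴴ = -(v1 * v2) := by
  rw [Matrix.conjTranspose_mul, v1_star, v2_star, Matrix.neg_mul, Matrix.mul_neg, neg_neg,
    v2_mul_v1]

lemma hGstar : ∀ a ∈ G, aᴴ ∈ G := by
  intro a ha
  rcases ha with h|h|h|h|h|h|h|h <;> subst h <;>
  simp only [G, Set.mem_insert_iff, Set.mem_singleton_iff, Matrix.conjTranspose_neg,
    Matrix.conjTranspose_one, v1_star, v2_star, v12_star, neg_neg] <;> tauto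


lemma hGmin : ∀ H : Set Mat2, v1 ∈ H → v2 ∈ H → (1 : Mat2) ∈ H →
    (∀ a ∈ H, ∀ b ∈ H, a * b ∈ H) → (∀ a ∈ H, aᴴ ∈ H) → IsClosed H → G ⊆ H := by
  intro H h1 h2 hone hmul _ _
  have hm1 : (-1 : Mat2) ∈ H := v1_mul_v1 ▸ hmul _ h1 _ h1
  have hneg : ∀ a ∈ H, -a ∈ H := fun a ha => by
    simpa [neg_one_mul] using hmul _ hm1 _ ha
  intro g hg
  rcases hg with h|h|h|h|h|h|h|h <;> subst h
  · exact hone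
  · exact hm1
  · exact h1
  · exact hneg _ h1
  · exact h2
  · exact hneg _ h2
  · exact hmul _ h1 _ h2
  · exact hneg _ (hmul _ h1 _ h2)

lemma hGclosed : IsClosed G := by
  have : G.Finite := by
    unfold G
    exact (((((((Set.finite_singleton _).insert _).insert _).insert _).insert _).insert
      _).insert _).insert _
  exact this.isClosed

-- Orbit machinery
lemma eP_coe (w : ℂ) : eP (w : OnePoint ℂ) = (WithLp.equiv 2 (Fin 2 → ℂ)).symm ![1, w] := rfl
lemma eP_infty : eP (∞ : OnePoint ℂ) = (WithLp.equiv 2 (Fin 2 → ℂ)).symm ![0, 1] := rfl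

lemma pinv_coe_ne {w : ℂ} (hw : w ≠ 0) : pinv (w : OnePoint ℂ) = ((w⁻¹ : ℂ) : OnePoint ℂ) := by
  simp [pinv, hw]
lemma pinv_zero : pinv ((0 : ℂ) : OnePoint ℂ) = (∞ : OnePoint ℂ) := by simp [pinv]
lemma pinv_infty : pinv (∞ : OnePoint ℂ) = ((0 : ℂ) : OnePoint ℂ) := rfl
lemma pneg_coe (w : ℂ) : pneg (w : OnePoint ℂ) = ((-w : ℂ) : OnePoint ℂ) := rfl
lemma pneg_infty : pneg (∞ : OnePoint ℂ) = (∞ : OnePoint ℂ) := rfl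

lemma vec_eq {g : Mat2} {u w : Fin 2 → ℂ} {c : ℂ} (h0 : g *ᵥ u = c • w) :
    matVec g ((WithLp.equiv 2 (Fin 2 → ℂ)).symm u)
      = c • (WithLp.equiv 2 (Fin 2 → ℂ)).symm w := by
  rw [matVec, WithLp.equiv_symm_apply, Matrix.toEuclideanLin_apply_piLp_toLp, h0]
  rfl

lemma mk_eq_pz {u : Evec2} (h : u ≠ 0) {c : ℂ} {z' : OnePoint ℂ} (he : u = c • eP z') :
    Projectivization.mk ℂ u h = pz z' := by
  have hc : c ≠ 0 := by
    rintro rfl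
    rw [he, zero_smul] at h
    exact h rfl
  exact (Projectivization.mk_eq_mk_iff ℂ u (eP z') h (eP_ne z')).2 ⟨Units.mk0 c hc, he.symm⟩

lemma eq_one (z : OnePoint ℂ) : matVec (1 : Mat2) (eP z) = (1 : ℂ) • eP z := by
  simp [matVec, Matrix.toEuclideanLin]

lemma v12_eq : v1 * v2 = !![0, -1; 1, 0] := by
  ext i j; fin_cases i <;> fin_cases j <;>
    simp [v1, v2, Matrix.mul_apply, Fin.sum_univ_two, Complex.I_mul_I]

lemma eq_v1 (z : OnePoint ℂ) : ∃ c : ℂ, c ≠ 0 ∧ matVec v1 (eP z) = c • eP (pneg z) := by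
  induction z using OnePoint.rec with
  | infty =>
    refine ⟨-Complex.I, by simp [Complex.I_ne_zero], ?_⟩
    rw [pneg_infty, eP_infty]
    refine vec_eq ?_
    funext i
    fin_cases i <;> simp [v1, Matrix.mulVec, dotProduct, Fin.sum_univ_two]
  | coe w =>
    refine ⟨Complex.I, Complex.I_ne_zero, ?_⟩
    rw [pneg_coe, eP_coe, eP_coe]
    refine vec_eq ?_
    funext i
    fin_cases i <;> simp [v1, Matrix.mulVec, dotProduct, Fin.sum_univ_two] <;> ring

lemma eq_v2 (z : OnePoint ℂ) : ∃ c : ℂ, c ≠ 0 ∧ matVec v2 (eP z) = c • eP (pinv z) := by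
  induction z using OnePoint.rec with
  | infty =>
    refine ⟨Complex.I, Complex.I_ne_zero, ?_⟩
    rw [pinv_infty, eP_infty, eP_coe]
    refine vec_eq ?_
    funext i
    fin_cases i <;> simp [v2, Matrix.mulVec, dotProduct, Fin.sum_univ_two]
  | coe w =>
    by_cases hw : w = 0
    · subst hw
      refine ⟨Complex.I, Complex.I_ne_zero, ?_⟩
      rw [pinv_zero, eP_infty, eP_coe]
      refine vec_eq ?_
      funext i
      fin_cases i <;> simp [v2, Matrix.mulVec, dotProduct, Fin.sum_univ_two]
    · refine ⟨Complex.I * w, by simp [Complex.I_ne_zero, hw], ?_⟩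
      rw [pinv_coe_ne hw, eP_coe, eP_coe]
      refine vec_eq ?_
      funext i
      fin_cases i <;>
        simp [v2, Matrix.mulVec, dotProduct, Fin.sum_univ_two] <;> field_simp <;> ring

lemma eq_v12 (z : OnePoint ℂ) :
    ∃ c : ℂ, c ≠ 0 ∧ matVec (v1 * v2) (eP z) = c • eP (pneg (pinv z)) := by
  induction z using OnePoint.rec with
  | infty =>
    refine ⟨-1, by norm_num, ?_⟩
    rw [pinv_infty, pneg_coe, eP_infty, eP_coe]
    refine vec_eq ?_
    funext i
    fin_cases i <;> simp [v12_eq, Matrix.mulVec, dotProduct, Fin.sum_univ_two]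
  | coe w =>
    by_cases hw : w = 0
    · subst hw
      refine ⟨1, one_ne_zero, ?_⟩
      rw [pinv_zero, pneg_infty, eP_infty, eP_coe]
      refine vec_eq ?_
      funext i
      fin_cases i <;> simp [v12_eq, Matrix.mulVec, dotProduct, Fin.sum_univ_two]
    · refine ⟨-w, by simpa using hw, ?_⟩
      rw [pinv_coe_ne hw, pneg_coe, eP_coe, eP_coe]
      refine vec_eq ?_
      funext i
      fin_cases i <;>
        simp [v12_eq, Matrix.mulVec, dotProduct, Fin.sum_univ_two] <;> field_simp

-- orbit theorem
lemma matVec_neg (g : Mat2) (x : Evec2) : matVec (-g) x = -(matVec g x) := by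
  simp [matVec, map_neg]

lemma hGv1 : v1 ∈ G := by right; right; left; rfl
lemma hGv2 : v2 ∈ G := by right; right; right; right; left; rfl
lemma hGv12 : v1 * v2 ∈ G := by right; right; right; right; right; right; left; rfl

lemma orbit_eq (z : OnePoint ℂ) :
    {y : Projectivization ℂ Evec2 | ∃ g ∈ G, ∃ h : matVec g (eP z) ≠ 0,
        y = Projectivization.mk ℂ _ h}
      = {pz z, pz (pinv z), pz (pneg z), pz (pneg (pinv z))} := by
  obtain ⟨c1, hc1, he1⟩ := eq_v1 z
  obtain ⟨c2, hc2, he2⟩ := eq_v2 z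
  obtain ⟨c3, hc3, he3⟩ := eq_v12 z
  ext y
  simp only [Set.mem_setOf_eq, Set.mem_insert_iff, Set.mem_singleton_iff]
  constructor
  · rintro ⟨g, hg, h, rfl⟩
    rcases hg with rfl|rfl|rfl|rfl|rfl|rfl|rfl|rfl
    · exact Or.inl (mk_eq_pz h (eq_one z))
    · exact Or.inl (mk_eq_pz h (by rw [matVec_neg, eq_one z, ← neg_smul]))
    · exact Or.inr (Or.inr (Or.inl (mk_eq_pz h he1)))
    · exact Or.inr (Or.inr (Or.inl (mk_eq_pz h (by rw [matVec_neg, he1, ← neg_smul]))))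
    · exact Or.inr (Or.inl (mk_eq_pz h he2))
    · exact Or.inr (Or.inl (mk_eq_pz h (by rw [matVec_neg, he2, ← neg_smul])))
    · exact Or.inr (Or.inr (Or.inr (mk_eq_pz h he3)))
    · exact Or.inr (Or.inr (Or.inr (mk_eq_pz h (by rw [matVec_neg, he3, ← neg_smul]))))
  · have h1 : matVec (1 : Mat2) (eP z) ≠ 0 := by
      rw [eq_one z, one_smul]; exact eP_ne z
    have hn1 : matVec v1 (eP z) ≠ 0 := by
      rw [he1]; exact smul_ne_zero hc1 (eP_ne _)
    have hn2 : matVec v2 (eP z) ≠ 0 := by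
      rw [he2]; exact smul_ne_zero hc2 (eP_ne _)
    have hn3 : matVec (v1 * v2) (eP z) ≠ 0 := by
      rw [he3]; exact smul_ne_zero hc3 (eP_ne _)
    rintro (rfl|rfl|rfl|rfl)
    · exact ⟨1, hG1, h1, (mk_eq_pz h1 (eq_one z)).symm⟩
    · exact ⟨v2, hGv2, hn2, (mk_eq_pz hn2 he2).symm⟩
    · exact ⟨v1, hGv1, hn1, (mk_eq_pz hn1 he1).symm⟩
    · exact ⟨v1 * v2, hGv12, hn3, (mk_eq_pz hn3 he3).symm⟩

-- Measurable singleton class instances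
instance : MeasurableSingletonClass Mat2 :=
  inferInstanceAs (MeasurableSingletonClass (Fin 2 → Fin 2 → ℂ))

instance : MeasurableSingletonClass (Projectivization ℂ Evec2) := by
  constructor
  intro x
  rw [show (MeasurableSet {x}) = MeasurableSet (Quotient.mk'' ⁻¹' ({x} : Set (Projectivization ℂ Evec2))) from rfl]
  have hset : (Quotient.mk'' ⁻¹' ({x} : Set (Projectivization ℂ Evec2)) : Set {v : Evec2 // v ≠ 0})
      = Subtype.val ⁻¹' ((Submodule.span ℂ {x.rep} : Submodule ℂ Evec2) : Set Evec2) := by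
    ext w
    simp only [Set.mem_preimage, Set.mem_singleton_iff, SetLike.mem_coe,
      Submodule.mem_span_singleton]
    constructor
    · intro hw
      have hmk : Projectivization.mk ℂ w.1 w.2 = x := hw
      rw [← x.mk_rep] at hmk
      obtain ⟨a, ha⟩ := (Projectivization.mk_eq_mk_iff ℂ _ _ _ _).1 hmk
      exact ⟨a, ha⟩
    · rintro ⟨a, ha⟩
      have ha0 : a ≠ 0 := by
        rintro rfl
        rw [zero_smul] at ha
        exact w.2 ha.symm
      have hmk : Projectivization.mk ℂ w.1 w.2 = Projectivization.mk ℂ x.rep x.rep_nonzero :=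
        (Projectivization.mk_eq_mk_iff ℂ _ _ _ _).2 ⟨Units.mk0 a ha0, ha⟩
      rw [Projectivization.mk_rep] at hmk
      exact hmk
  rw [hset]
  exact ((Submodule.span ℂ {x.rep}).closed_of_finiteDimensional.measurableSet).preimage
    measurable_subtype_coe

lemma matVec_apply (g : Mat2) (u : Evec2) (i : Fin 2) :
    matVec g u i = ∑ j, g i j * u j := by
  have h2 := congrFun (Matrix.ofLp_toEuclideanLin_apply g u) i
  simpa [matVec, Matrix.mulVec, dotProduct] using h2

lemma norm_matVec_v1 (u : Evec2) : ‖matVec v1 u‖ = ‖u‖ := by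
  rw [EuclideanSpace.norm_eq, EuclideanSpace.norm_eq]
  congr 1
  rw [Fin.sum_univ_two, Fin.sum_univ_two, matVec_apply, matVec_apply]
  simp [v1, Fin.sum_univ_two]

lemma norm_matVec_v2 (u : Evec2) : ‖matVec v2 u‖ = ‖u‖ := by
  rw [EuclideanSpace.norm_eq, EuclideanSpace.norm_eq]
  congr 1
  rw [Fin.sum_univ_two, Fin.sum_univ_two, matVec_apply, matVec_apply]
  simp [v2, Fin.sum_univ_two]
  ring

lemma unitRep_norm (x : Projectivization ℂ Evec2) : ‖unitRep x‖ = 1 := by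
  rw [unitRep, norm_smul]
  have h := x.rep_nonzero
  have hn : ‖x.rep‖ ≠ 0 := norm_ne_zero_iff.2 h
  rw [norm_inv, Complex.norm_real, Real.norm_eq_abs, abs_of_nonneg (norm_nonneg _)]
  exact inv_mul_cancel₀ hn

lemma unitRep_pz (ζ : OnePoint ℂ) : ∃ c : ℂ, c ≠ 0 ∧ unitRep (pz ζ) = c • eP ζ := by
  obtain ⟨a, ha⟩ := Projectivization.exists_smul_eq_mk_rep ℂ (eP ζ) (eP_ne ζ)
  refine ⟨(↑‖(pz ζ).rep‖⁻¹ : ℂ) * (a : ℂ), ?_, ?_⟩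
  · apply mul_ne_zero
    · simpa using norm_ne_zero_iff.2 (pz ζ).rep_nonzero
    · exact a.ne_zero
  · rw [unitRep, show (pz ζ).rep = (Projectivization.mk ℂ (eP ζ) (eP_ne ζ)).rep from rfl, ← ha,
      Units.smul_def, smul_smul]
    norm_cast

lemma matVec_smulv (g : Mat2) (c : ℂ) (x : Evec2) : matVec g (c • x) = c • matVec g x :=
  (Matrix.toEuclideanLin g).map_smul c x

lemma kerInt_eq (g : Mat2) (hnorm : ∀ u : Evec2, ‖matVec g u‖ = ‖u‖) {ζ ζ' : OnePoint ℂ}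
    {c : ℂ} (he : matVec g (eP ζ) = c • eP ζ') (S : Set (Projectivization ℂ Evec2)) :
    kerInt g (pz ζ) S = S.indicator (fun _ => (1 : ℝ)) (pz ζ') := by
  obtain ⟨d, hd, hu⟩ := unitRep_pz ζ
  have hne : matVec g (unitRep (pz ζ)) ≠ 0 := by
    intro h0
    have h1 := hnorm (unitRep (pz ζ))
    rw [h0, norm_zero, unitRep_norm] at h1
    exact one_ne_zero h1.symm
  rw [kerInt, dif_neg hne]
  have hpt : Projectivization.mk ℂ _ hne = pz ζ' := by
    apply mk_eq_pz hne
    rw [hu, matVec_smulv, he, smul_smul]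
  rw [hpt]
  have hval : ‖matVec g (unitRep (pz ζ))‖ ^ 2 = 1 := by
    rw [hnorm, unitRep_norm]; norm_num
  simp only [hval]

lemma integrable_dirac' {α E : Type*} [MeasurableSpace α] [MeasurableSingletonClass α]
    [NormedAddCommGroup E] (f : α → E) (a : α) : Integrable f (Measure.dirac a) :=
  (integrable_const (f a)).congr (ae_eq_dirac f).symm

lemma PiKer_eq (ζ : OnePoint ℂ) (S : Set (Projectivization ℂ Evec2)) :
    PiKer muEx (pz ζ) S
      = (S.indicator (fun _ => (1 : ℝ)) (pz (pneg ζ))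
        + S.indicator (fun _ => (1 : ℝ)) (pz (pinv ζ))) / 2 := by
  obtain ⟨c1, hc1, he1⟩ := eq_v1 ζ
  obtain ⟨c2, hc2, he2⟩ := eq_v2 ζ
  rw [PiKer, muEx, integral_smul_measure,
    integral_add_measure (_root_.integrable_dirac' _ _) (_root_.integrable_dirac' _ _),
    integral_dirac, integral_dirac,
    kerInt_eq v1 norm_matVec_v1 he1 S, kerInt_eq v2 norm_matVec_v2 he2 S]
  simp [ENNReal.toReal_inv]
  ring

lemma pneg_pneg (z : OnePoint ℂ) : pneg (pneg z) = z := by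
  induction z using OnePoint.rec with
  | infty => rfl
  | coe w => simp [pneg]

lemma pinv_pinv (z : OnePoint ℂ) : pinv (pinv z) = z := by
  induction z using OnePoint.rec with
  | infty => rw [pinv_infty, pinv_zero]
  | coe w =>
    by_cases hw : w = 0
    · subst hw; rw [pinv_zero, pinv_infty]
    · rw [pinv_coe_ne hw, pinv_coe_ne (inv_ne_zero hw), inv_inv]

lemma pinv_pneg (z : OnePoint ℂ) : pinv (pneg z) = pneg (pinv z) := by
  induction z using OnePoint.rec with
  | infty => simp [pneg_infty, pinv_infty, pneg_coe, neg_zero]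
  | coe w =>
    by_cases hw : w = 0
    · subst hw; simp [pneg, pinv]
    · rw [pneg_coe, pinv_coe_ne (neg_ne_zero.2 hw), pinv_coe_ne hw, pneg_coe, neg_inv]

lemma invar (z : OnePoint ℂ) (S : Set (Projectivization ℂ Evec2)) (_ : MeasurableSet S) :
    ∫ x, PiKer muEx x S ∂(nuEx z) = (nuEx z S).toReal := by
  rw [nuEx, integral_smul_measure,
    integral_add_measure
      (((_root_.integrable_dirac' _ _).add_measure (_root_.integrable_dirac' _ _)).add_measure
        (_root_.integrable_dirac' _ _)) (_root_.integrable_dirac' _ _),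
    integral_add_measure
      ((_root_.integrable_dirac' _ _).add_measure (_root_.integrable_dirac' _ _)) (_root_.integrable_dirac' _ _),
    integral_add_measure (_root_.integrable_dirac' _ _) (_root_.integrable_dirac' _ _),
    integral_dirac, integral_dirac, integral_dirac, integral_dirac,
    PiKer_eq z S, PiKer_eq (pneg z) S, PiKer_eq (pinv z) S, PiKer_eq (pneg (pinv z)) S]
  simp only [pneg_pneg, pinv_pneg, pinv_pinv]
  rw [Measure.smul_apply, Measure.add_apply, Measure.add_apply, Measure.add_apply,
    Measure.dirac_apply, Measure.dirac_apply, Measure.dirac_apply, Measure.dirac_apply,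
    smul_eq_mul]
  by_cases h1 : pz z ∈ S <;> by_cases h2 : pz (pneg z) ∈ S <;>
    by_cases h3 : pz (pinv z) ∈ S <;> by_cases h4 : pz (pneg (pinv z)) ∈ S <;>
    simp [Set.indicator_of_mem, Set.indicator_of_notMem, h1, h2, h3, h4,
      ENNReal.toReal_inv] <;>
    norm_num


/-- For `μ = (δ_{v₁}+δ_{v₂})/2` with `v₁ = diag(i,-i)`, `v₂ = [[0,i],[i,0]]`: `G` is the
smallest closed subgroup of `SU(2)` containing `v₁, v₂`; the `G`-orbit of `ê_z` is
`{ê_z, ê_{z⁻¹}, ê_{-z}, ê_{-z⁻¹}}`; and the uniform measure on this orbit is invariant for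
the kernel `Π`. -/
theorem stmt19 :
    -- G consists of special unitary matrices and contains v₁, v₂
    (∀ g ∈ G, gᴴ * g = 1 ∧ g.det = 1) ∧ v1 ∈ G ∧ v2 ∈ G ∧
    -- G is a closed subgroup (in SU(2), the inverse is the conjugate transpose)
    (1 : Mat2) ∈ G ∧ (∀ a ∈ G, ∀ b ∈ G, a * b ∈ G) ∧ (∀ a ∈ G, aᴴ ∈ G) ∧ IsClosed G ∧
    -- minimality: any closed subgroup containing v₁, v₂ contains G
    (∀ H : Set Mat2, v1 ∈ H → v2 ∈ H → (1 : Mat2) ∈ H →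
      (∀ a ∈ H, ∀ b ∈ H, a * b ∈ H) → (∀ a ∈ H, aᴴ ∈ H) → IsClosed H → G ⊆ H) ∧
    -- the orbit of ê_z under G
    (∀ z : OnePoint ℂ,
      {y : Projectivization ℂ Evec2 | ∃ g ∈ G, ∃ h : matVec g (eP z) ≠ 0,
          y = Projectivization.mk ℂ _ h}
        = {pz z, pz (pinv z), pz (pneg z), pz (pneg (pinv z))}) ∧
    -- invariance of the uniform measure on the orbit
    (∀ z : OnePoint ℂ, ∀ S : Set (Projectivization ℂ Evec2), MeasurableSet S →
      ∫ x, PiKer muEx x S ∂(nuEx z) = (nuEx z S).toReal) := by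
  exact ⟨hGsu, hGv1, hGv2, hG1, hGmul, hGstar, hGclosed, hGmin, orbit_eq, invar⟩
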